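/- arXiv:1607.01729 — 6 statements merged into one kernel-verified Lean document; each statement's English description precedes it below -/
import Mathlib

section
/- Let L be a finite set (of landmarks), A a type (of actions) with a cost function cost : A → ℝ≥0, and for each φ ∈ L a set of achievers ach(φ) ⊆ A. Let (x, c) be a cost partition for (L, ach, cost). If π is a finite list of elements of A such that for every φ ∈ L at least one member of π belongs to ach(φ), then Σ_{φ∈L} c(φ) ≤ Σ_{a in π} cost(a), where the right-hand sum is over the entries of the list π counted with multiplicity. -/
open scoped Classical

lemma toFinset_sum_le_list_sum {A : Type*} [DecidableEq A] (cost : A → NNReal) (π : List A) :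
    ∑ a ∈ π.toFinset, cost a ≤ (π.map cost).sum := by
  induction π with
  | nil => simp
  | cons a l ih =>
    simp only [List.toFinset_cons, List.map_cons, List.sum_cons]
    by_cases h : a ∈ l.toFinset
    · rw [Finset.insert_eq_self.mpr h]
      exact le_add_left ih
    · rw [Finset.sum_insert h]
      exact add_le_add_right ih _

/-- If `(x, c)` is a cost partition for `(L, ach, cost)` and every landmark in `L` has an
achiever among the entries of the plan `π`, then `Σ_{φ∈L} c φ` is at most the total cost
of `π` (entries counted with multiplicity). -/
theorem sum_costPartition_le_planCost {A : Type*} {Λ : Type*} (L : Finset Λ)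
    (cost : A → NNReal) (ach : Λ → Set A) (x : A → Λ → NNReal) (c : Λ → NNReal)
    (hx : ∀ a : A, ∑ φ ∈ L.filter (fun φ => a ∈ ach φ), x a φ ≤ cost a)
    (hc : ∀ φ ∈ L, ∀ a ∈ ach φ, c φ ≤ x a φ)
    (π : List A) (hach : ∀ φ ∈ L, ∃ a ∈ π, a ∈ ach φ) :
    ∑ φ ∈ L, c φ ≤ (π.map cost).sum := by
  classical
  choose f hfπ hfach using hach
  have h1 : ∑ φ ∈ L, c φ = ∑ φ ∈ L.attach, c φ.1 := (Finset.sum_attach L c).symm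
  rw [h1]
  have h2 : ∑ φ ∈ L.attach, c φ.1 ≤ ∑ φ ∈ L.attach, x (f φ.1 φ.2) φ.1 :=
    Finset.sum_le_sum fun φ _ => hc φ.1 φ.2 _ (hfach φ.1 φ.2)
  refine h2.trans ?_
  have hmaps : ∀ φ ∈ L.attach, f φ.1 φ.2 ∈ π.toFinset := fun φ _ =>
    List.mem_toFinset.mpr (hfπ φ.1 φ.2)
  rw [← Finset.sum_fiberwise_of_maps_to hmaps (fun φ => x (f φ.1 φ.2) φ.1)]
  refine le_trans ?_ (toFinset_sum_le_list_sum cost π)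
  refine Finset.sum_le_sum fun a _ => le_trans ?_ (hx a)
  have heq : ∑ φ ∈ L.attach.filter (fun φ => f φ.1 φ.2 = a), x (f φ.1 φ.2) φ.1
      = ∑ φ ∈ L.attach.filter (fun φ => f φ.1 φ.2 = a), x a φ.1 := by
    refine Finset.sum_congr rfl fun φ hφ => ?_
    rw [(Finset.mem_filter.mp hφ).2]
  rw [heq]
  have himg : ∑ φ ∈ ((L.attach.filter (fun φ => f φ.1 φ.2 = a)).image Subtype.val), x a φ
      = ∑ φ ∈ L.attach.filter (fun φ => f φ.1 φ.2 = a), x a φ.1 :=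
    Finset.sum_image (fun y _ z _ h => Subtype.ext h)
  rw [← himg]
  refine Finset.sum_le_sum_of_subset ?_
  intro φ hφ
  simp only [Finset.mem_image, Finset.mem_filter, Finset.mem_attach, true_and] at hφ
  obtain ⟨⟨φ', hφ'⟩, hfa, rfl⟩ := hφ
  exact Finset.mem_filter.mpr ⟨hφ', hfa ▸ hfach φ' hφ'⟩
end

section
/- Let gn = (T, ≺, goal) be a goal network, t ∈ T a node, and φ ∈ F a fact. If φ is a landmark of the classical planning problem (s₀, g_t), then φ is a landmark of the relaxed HGN planning problem (s₀, gn): every plan solving (s₀, gn) has φ in some intermediate state. -/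
open scoped Classical

/-- An action: precondition, add effects, delete effects, and a nonnegative cost. -/
structure PAction (F : Type*) where
  pre : Set F
  add : Set F
  del : Set F
  cost : NNReal

variable {F : Type*}

/-- The state resulting from applying action `a` in state `s`: `(s \ del a) ∪ add a`. -/
def applyAction (s : Set F) (a : PAction F) : Set F := (s \ a.del) ∪ a.add

/-- A plan is executable from `s` if each action's precondition holds in the state
produced by the previous actions. -/
def Exec : Set F → List (PAction F) → Prop
  | _, [] => True
  | s, a :: rest => a.pre ⊆ s ∧ Exec (applyAction s a) rest

/-- The state obtained by running a plan from `s`. -/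
def runPlan : Set F → List (PAction F) → Set F
  | s, [] => s
  | s, a :: rest => runPlan (applyAction s a) rest

/-- The `i`-th intermediate state `σᵢ` of a plan `π` started in `s`
(the result of executing the first `i` actions). -/
def stateAt (s : Set F) (π : List (PAction F)) (i : ℕ) : Set F := runPlan s (π.take i)

/-- The cost of a plan: the sum of the costs of its actions (with multiplicity). -/
def planCost (π : List (PAction F)) : NNReal := (π.map PAction.cost).sum

/-- A plan solves the classical planning problem `(s₀, g)` (with `g` a set of states)
if it is executable from `s₀` and its final state lies in `g`. -/
def Solves (s₀ : Set F) (g : Set (Set F)) (π : List (PAction F)) : Prop :=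
  Exec s₀ π ∧ stateAt s₀ π π.length ∈ g

/-- A fact `φ` is a landmark of the problem `(s₀, g)` if every solution plan has `φ`
in some intermediate state. -/
def IsLandmark (s₀ : Set F) (g : Set (Set F)) (φ : F) : Prop :=
  ∀ π, Solves s₀ g π → ∃ i ≤ π.length, φ ∈ stateAt s₀ π i

/-- A goal network: a finite set `T` of nodes, an order relation `prec` on the nodes,
and a goal (a set of states) attached to each node. -/
structure GoalNetwork (F : Type*) (ν : Type*) where
  T : Finset ν
  prec : ν → ν → Prop
  goal : ν → Set (Set F)

variable {ν : Type*}

/-- `prec` is a strict partial order on the nodes of the network. -/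
def GoalNetwork.IsStrictOrder (gn : GoalNetwork F ν) : Prop :=
  (∀ t ∈ gn.T, ¬ gn.prec t t) ∧
    (∀ t ∈ gn.T, ∀ u ∈ gn.T, ∀ v ∈ gn.T, gn.prec t u → gn.prec u v → gn.prec t v)

/-- A node is unconstrained if it has no `≺`-predecessor in the network. -/
def Unconstrained (gn : GoalNetwork F ν) (t : ν) : Prop := ∀ u ∈ gn.T, ¬ gn.prec u t

/-- A plan `π` solves the relaxed HGN planning problem `(s₀, gn)` if it is executable from
`s₀` and there is `τ : T → {0,…,n}` with `σ_{τ t} ∈ goal t` for all `t ∈ T` and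
`τ t ≤ τ u` whenever `t ≺ u`. -/
def SolvesRelaxed (s₀ : Set F) (gn : GoalNetwork F ν) (π : List (PAction F)) : Prop :=
  Exec s₀ π ∧ ∃ τ : ν → ℕ,
    (∀ t ∈ gn.T, τ t ≤ π.length ∧ stateAt s₀ π (τ t) ∈ gn.goal t) ∧
    (∀ t ∈ gn.T, ∀ u ∈ gn.T, gn.prec t u → τ t ≤ τ u)

/-- A fact `φ` is a landmark of the relaxed HGN problem `(s₀, gn)` if every plan solving it
has `φ` in some intermediate state. -/
def IsRelaxedLandmark (s₀ : Set F) (gn : GoalNetwork F ν) (φ : F) : Prop :=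
  ∀ π, SolvesRelaxed s₀ gn π → ∃ i ≤ π.length, φ ∈ stateAt s₀ π i


theorem exec_take (s : Set F) : ∀ (π : List (PAction F)) (k : ℕ), Exec s π → Exec s (π.take k)
  | [], k, h => by cases k <;> exact h
  | a :: rest, 0, _ => trivial
  | a :: rest, k+1, h => ⟨h.1, exec_take _ rest k h.2⟩

theorem stateAt_take (s : Set F) (π : List (PAction F)) {i k : ℕ} (h : i ≤ k) :
    stateAt s (π.take k) i = stateAt s π i := by
  simp [stateAt, List.take_take, Nat.min_eq_left h]

/-- A landmark of the classical planning problem `(s₀, goal t)` for a node `t` of `gn`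
is also a landmark of the relaxed HGN planning problem `(s₀, gn)`. -/
theorem relaxedLandmark_of_landmark_of_node (s₀ : Set F) (gn : GoalNetwork F ν)
    (hstrict : gn.IsStrictOrder) (t : ν) (ht : t ∈ gn.T) (φ : F)
    (hφ : IsLandmark s₀ (gn.goal t) φ) :
    IsRelaxedLandmark s₀ gn φ := by
  rintro π ⟨hexec, τ, hτ, -⟩
  obtain ⟨hk, hg⟩ := hτ t ht
  set k := τ t
  have hlen : (π.take k).length = k := by simp [Nat.min_eq_left hk]
  have hsolves : Solves s₀ (gn.goal t) (π.take k) := by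
    refine ⟨exec_take s₀ π k hexec, ?_⟩
    rw [hlen, stateAt_take s₀ π (le_refl k)]
    exact hg
  obtain ⟨i, hi, hφi⟩ := hφ _ hsolves
  rw [hlen] at hi
  exact ⟨i, hi.trans hk, by rwa [stateAt_take s₀ π hi] at hφi⟩
end

section
/- Let gn = (T, ≺, goal) be a goal network, t ∈ T an unconstrained node, and m an HGN method with last node t_g. Then every plan solving the relaxed HGN planning problem (s₀, gn ∘_t m) also solves the relaxed HGN planning problem (s₀, gn). -/
open scoped Classical

variable {F : Type*}

variable {ν : Type*}

/-- An HGN method: a precondition and a goal network with a distinguished 'last' node `tg`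
that is maximal in the network's order. -/
structure Method (F : Type*) (ν : Type*) where
  precond : Set F
  network : GoalNetwork F ν
  tg : ν
  tg_mem : tg ∈ network.T
  tg_max : ∀ u ∈ network.T, ¬ network.prec tg u

/-- Method application `gn ∘ₜ m` (for node sets taken disjoint): the node set is the union of
the two node sets, the order contains both orders together with `tg ≺ t`, and goals are
inherited (from `network m` on its nodes, from `gn` elsewhere). -/
noncomputable def GoalNetwork.applyMethod (gn : GoalNetwork F ν) (t : ν) (m : Method F ν) :
    GoalNetwork F ν where
  T := gn.T ∪ m.network.T
  prec := fun a b => gn.prec a b ∨ m.network.prec a b ∨ (a = m.tg ∧ b = t)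
  goal := fun a => if a ∈ m.network.T then m.network.goal a else gn.goal a

/-- Goal release `gn − t`: remove node `t` and all orderings involving it. -/
noncomputable def GoalNetwork.release (gn : GoalNetwork F ν) (t : ν) : GoalNetwork F ν where
  T := gn.T.erase t
  prec := fun a b => gn.prec a b ∧ a ≠ t ∧ b ≠ t
  goal := gn.goal

/-- The HGN solution set `S(s₀, gn)` (Definition of solutions to HGN planning problems),
relative to relevance relations `relA` (actions) and `relM` (methods). -/
inductive HGNSol (relA : PAction F → Set (Set F) → Prop)
    (relM : Method F ν → Set (Set F) → Prop) :
    Set F → GoalNetwork F ν → List (PAction F) → Prop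
  | base (s : Set F) (gn : GoalNetwork F ν) : gn.T = ∅ → HGNSol relA relM s gn []
  | satisfied (s : Set F) (gn : GoalNetwork F ν) (t : ν) (π : List (PAction F)) :
      t ∈ gn.T → Unconstrained gn t → s ∈ gn.goal t →
      HGNSol relA relM s (gn.release t) π → HGNSol relA relM s gn π
  | action (s : Set F) (gn : GoalNetwork F ν) (t : ν) (a : PAction F) (π : List (PAction F)) :
      t ∈ gn.T → Unconstrained gn t → a.pre ⊆ s → relA a (gn.goal t) →
      HGNSol relA relM (applyAction s a) gn π → HGNSol relA relM s gn (a :: π)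
  | method (s : Set F) (gn : GoalNetwork F ν) (t : ν) (m : Method F ν) (π : List (PAction F)) :
      t ∈ gn.T → Unconstrained gn t → m.precond ⊆ s → relM m (gn.goal t) →
      Disjoint gn.T m.network.T →
      HGNSol relA relM s (gn.applyMethod t m) π → HGNSol relA relM s gn π

/-- Every plan solving the relaxed HGN planning problem after a method application
`(s₀, gn ∘ₜ m)` also solves the relaxed HGN planning problem `(s₀, gn)`. -/
theorem solvesRelaxed_of_applyMethod (s₀ : Set F) (gn : GoalNetwork F ν)
    (hstrict : gn.IsStrictOrder) (t : ν) (ht : t ∈ gn.T) (hunc : Unconstrained gn t)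
    (m : Method F ν) (hdisj : Disjoint gn.T m.network.T)
    (π : List (PAction F)) (hπ : SolvesRelaxed s₀ (gn.applyMethod t m) π) :
    SolvesRelaxed s₀ gn π := by
  obtain ⟨hexec, τ, hgoal, horder⟩ := hπ
  refine ⟨hexec, τ, fun u hu => ?_, fun u hu v hv huv => ?_⟩
  · have hu' : u ∈ (gn.applyMethod t m).T := Finset.mem_union_left _ hu
    have := hgoal u hu'
    have hnm : u ∉ m.network.T := fun h => (Finset.disjoint_left.mp hdisj hu) h
    simpa [GoalNetwork.applyMethod, hnm] using this
  · exact horder u (Finset.mem_union_left _ hu) v (Finset.mem_union_left _ hv) (Or.inl huv)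
end

section
/- For every relevance relation rel, every plan π in the HGN solution set S(s₀, gn₀) solves the relaxed HGN planning problem (s₀, gn₀); i.e., π is executable from s₀ and achieves the goals of gn₀ in an order consistent with its constraints. (Every solution of an HGN planning problem is a solution of its relaxation.) -/
open scoped Classical

variable {F : Type*}

variable {ν : Type*}

/-- Every solution of the HGN planning problem `(s₀, gn₀)` (for any relevance relations)
solves its relaxation: it is executable from `s₀` and achieves the goals of `gn₀` in an
order consistent with its constraints. -/
theorem solvesRelaxed_of_hgnSol (relA : PAction F → Set (Set F) → Prop)
    (relM : Method F ν → Set (Set F) → Prop) (s₀ : Set F) (gn₀ : GoalNetwork F ν)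
    (hstrict : gn₀.IsStrictOrder)
    (π : List (PAction F)) (hπ : HGNSol relA relM s₀ gn₀ π) :
    SolvesRelaxed s₀ gn₀ π := by
  clear hstrict
  induction hπ with
  | base s gn hT =>
      refine ⟨trivial, fun _ => 0, ?_, ?_⟩ <;> simp [hT]
  | satisfied s gn t π ht hunc hgoal _ ih =>
      obtain ⟨hexec, τ, hτ1, hτ2⟩ := ih
      refine ⟨hexec, fun a => if a = t then 0 else τ a, ?_, ?_⟩
      · intro u hu
        by_cases hut : u = t
        · subst hut
          simpa [stateAt, runPlan] using hgoal
        · have hu' : u ∈ gn.T.erase t := Finset.mem_erase.mpr ⟨hut, hu⟩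
          simpa [hut, GoalNetwork.release] using hτ1 u hu'
      · intro u hu v hv hprec
        by_cases hut : u = t
        · simp [hut]
        · have hvt : v ≠ t := by
            rintro rfl; exact hunc u hu hprec
          have hu' : u ∈ (gn.release t).T := Finset.mem_erase.mpr ⟨hut, hu⟩
          have hv' : v ∈ (gn.release t).T := Finset.mem_erase.mpr ⟨hvt, hv⟩
          have := hτ2 u hu' v hv' ⟨hprec, hut, hvt⟩
          simpa [hut, hvt] using this
  | action s gn t a π ht hunc hpre hrel _ ih =>
      obtain ⟨hexec, τ, hτ1, hτ2⟩ := ih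
      refine ⟨⟨hpre, hexec⟩, fun u => τ u + 1, ?_, ?_⟩
      · intro u hu
        obtain ⟨h1, h2⟩ := hτ1 u hu
        refine ⟨by simpa using Nat.succ_le_succ h1, ?_⟩
        simpa [stateAt, runPlan] using h2
      · intro u hu v hv hprec
        exact Nat.succ_le_succ (hτ2 u hu v hv hprec)
  | method s gn t m π ht hunc hpre hrel hdisj _ ih =>
      obtain ⟨hexec, τ, hτ1, hτ2⟩ := ih
      refine ⟨hexec, τ, ?_, ?_⟩
      · intro u hu
        have hu' : u ∈ (gn.applyMethod t m).T := Finset.mem_union_left _ hu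
        obtain ⟨h1, h2⟩ := hτ1 u hu'
        have hnm : u ∉ m.network.T := Finset.disjoint_left.mp hdisj hu
        refine ⟨h1, ?_⟩
        simpa [GoalNetwork.applyMethod, hnm] using h2
      · intro u hu v hv hprec
        exact hτ2 u (Finset.mem_union_left _ hu) v (Finset.mem_union_left _ hv)
          (Or.inl hprec)
end

section
/- If a fact φ ∈ F is a landmark of the relaxed HGN planning problem (s₀, gn₀), then for every relevance relation rel, every plan π ∈ S(s₀, gn₀) has φ in some intermediate state; i.e., φ is a landmark of the HGN planning problem (s₀, gn₀). -/
open scoped Classical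

variable {F : Type*}

variable {ν : Type*}

theorem HGNSol.solvesRelaxed {relA : PAction F → Set (Set F) → Prop}
    {relM : Method F ν → Set (Set F) → Prop} {s : Set F} {gn : GoalNetwork F ν}
    {π : List (PAction F)} (h : HGNSol relA relM s gn π) : SolvesRelaxed s gn π := by
  induction h with
  | base s gn hT =>
    refine ⟨trivial, fun _ => 0, ?_, ?_⟩ <;> simp [hT]
  | satisfied s gn t π ht hu hg _ ih =>
    obtain ⟨he, τ, h1, h2⟩ := ih
    refine ⟨he, fun u => if u = t then 0 else τ u, ?_, ?_⟩
    · intro u hu'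
      by_cases h : u = t
      · subst h
        simp only [if_pos rfl]
        exact ⟨Nat.zero_le _, hg⟩
      · simpa [h, GoalNetwork.release] using h1 u (Finset.mem_erase.mpr ⟨h, hu'⟩)
    · intro u hu' v hv' hp
      by_cases h : v = t
      · exact absurd hp (h ▸ hu u hu')
      · by_cases h' : u = t
        · simp [h']
        · simpa [h, h'] using
            h2 u (Finset.mem_erase.mpr ⟨h', hu'⟩) v (Finset.mem_erase.mpr ⟨h, hv'⟩) ⟨hp, h', h⟩
  | action s gn t a π ht hu hpre hrel _ ih =>
    obtain ⟨he, τ, h1, h2⟩ := ih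
    refine ⟨⟨hpre, he⟩, fun u => τ u + 1, ?_, ?_⟩
    · intro u hu'
      obtain ⟨hle, hst⟩ := h1 u hu'
      exact ⟨by simpa using Nat.add_le_add_right hle 1, hst⟩
    · intro u hu' v hv' hp
      exact Nat.add_le_add_right (h2 u hu' v hv' hp) 1
  | method s gn t m π ht hu hpre hrel hdisj _ ih =>
    obtain ⟨he, τ, h1, h2⟩ := ih
    refine ⟨he, τ, ?_, ?_⟩
    · intro u hu'
      have hnot : u ∉ m.network.T := Finset.disjoint_left.mp hdisj hu'
      simpa [GoalNetwork.applyMethod, hnot] using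
        h1 u (Finset.mem_union_left _ hu')
    · intro u hu' v hv' hp
      exact h2 u (Finset.mem_union_left _ hu') v (Finset.mem_union_left _ hv') (Or.inl hp)

/-- A landmark of the relaxed HGN planning problem `(s₀, gn₀)` is a landmark of the HGN
planning problem itself: for any relevance relations, every HGN solution has the fact in
some intermediate state. -/
theorem hgn_landmark_of_relaxedLandmark (s₀ : Set F) (gn₀ : GoalNetwork F ν)
    (hstrict : gn₀.IsStrictOrder) (φ : F) (hφ : IsRelaxedLandmark s₀ gn₀ φ)
    (relA : PAction F → Set (Set F) → Prop) (relM : Method F ν → Set (Set F) → Prop)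
    (π : List (PAction F)) (hπ : HGNSol relA relM s₀ gn₀ π) :
    ∃ i ≤ π.length, φ ∈ stateAt s₀ π i := by
  exact hφ π hπ.solvesRelaxed
end

section
/- Let L be a finite set of facts such that every φ ∈ L is a landmark of the relaxed HGN planning problem (s₀, gn₀) and φ ∉ s₀, and set ach(φ) = {a : φ ∈ add(a)}. Then for every cost partition (x, c) for (L, ach, cost) and every plan π solving the relaxed HGN planning problem (s₀, gn₀), Σ_{φ∈L} c(φ) ≤ cost(π). -/
open scoped Classical

variable {F : Type*}

variable {ν : Type*}

lemma mem_runPlan_aux {F : Type*} {s : Set F} {π : List (PAction F)} {φ : F}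
    (h : φ ∈ runPlan s π) : φ ∈ s ∨ ∃ a ∈ π, φ ∈ a.add := by
  induction π generalizing s with
  | nil => exact Or.inl h
  | cons a rest ih =>
    rcases ih h with h' | ⟨b, hb, hφ⟩
    · rcases h' with ⟨hs, _⟩ | hadd
      · exact Or.inl hs
      · exact Or.inr ⟨a, List.mem_cons_self, hadd⟩
    · exact Or.inr ⟨b, List.mem_cons_of_mem _ hb, hφ⟩

lemma planCost_eq_fin {F : Type*} (π : List (PAction F)) :
    planCost π = ∑ j : Fin π.length, (π.get j).cost := by
  induction π with
  | nil => simp [planCost]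
  | cons a rest ih =>
    simp [planCost, Fin.sum_univ_succ, List.get, ← ih]

/-- Landmark cost-partition lower bound for relaxed HGN planning: if every `φ ∈ L` is a
landmark of the relaxed HGN problem `(s₀, gn₀)` not holding initially,
`ach φ = {a | φ ∈ add a}`, and `(x, c)` is a cost partition, then `Σ_{φ∈L} c φ` is at most
the cost of every plan solving the relaxed HGN problem. -/
theorem sum_costPartition_le_cost_of_solvesRelaxed (s₀ : Set F) (gn₀ : GoalNetwork F ν)
    (hstrict : gn₀.IsStrictOrder) (L : Finset F)
    (hL : ∀ φ ∈ L, IsRelaxedLandmark s₀ gn₀ φ ∧ φ ∉ s₀)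
    (x : PAction F → F → NNReal) (c : F → NNReal)
    (hx : ∀ a : PAction F, ∑ φ ∈ L.filter (fun φ => φ ∈ a.add), x a φ ≤ a.cost)
    (hc : ∀ φ ∈ L, ∀ a : PAction F, φ ∈ a.add → c φ ≤ x a φ)
    (π : List (PAction F)) (hπ : SolvesRelaxed s₀ gn₀ π) :
    ∑ φ ∈ L, c φ ≤ planCost π := by
  classical
  obtain ⟨hexec, hτ⟩ := hπ
  have key : ∀ φ ∈ L, ∃ j : ℕ, ∃ h : j < π.length, φ ∈ (π.get ⟨j, h⟩).add := by
    intro φ hφ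
    obtain ⟨hlm, hns⟩ := hL φ hφ
    obtain ⟨i, _, hmem⟩ := hlm π ⟨hexec, hτ⟩
    rcases mem_runPlan_aux hmem with hs | ⟨a, ha, hadd⟩
    · exact absurd hs hns
    · obtain ⟨j, hj⟩ := List.mem_iff_get.mp (List.mem_of_mem_take ha)
      exact ⟨j, j.isLt, by rwa [show π.get ⟨j, j.isLt⟩ = a from hj]⟩
  set f : F → ℕ := fun φ => if h : φ ∈ L then (key φ h).choose else 0 with hf
  have hspec : ∀ φ (hφ : φ ∈ L), ∃ h : f φ < π.length, φ ∈ (π.get ⟨f φ, h⟩).add := by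
    intro φ hφ
    simp only [hf, dif_pos hφ]
    exact (key φ hφ).choose_spec
  have hmap : ∀ φ ∈ L, f φ ∈ Finset.range π.length := by
    intro φ hφ
    exact Finset.mem_range.mpr (hspec φ hφ).choose
  calc ∑ φ ∈ L, c φ
      = ∑ j ∈ Finset.range π.length, ∑ φ ∈ L.filter (fun φ => f φ = j), c φ :=
        (Finset.sum_fiberwise_of_maps_to hmap _).symm
    _ = ∑ j : Fin π.length, ∑ φ ∈ L.filter (fun φ => f φ = j.val), c φ :=
        (Fin.sum_univ_eq_sum_range _ _).symm
    _ ≤ ∑ j : Fin π.length, (π.get j).cost := by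
        apply Finset.sum_le_sum
        intro j _
        have step1 : ∑ φ ∈ L.filter (fun φ => f φ = j.val), c φ ≤
            ∑ φ ∈ L.filter (fun φ => f φ = j.val), x (π.get j) φ := by
          apply Finset.sum_le_sum
          intro φ hφ
          obtain ⟨hφL, hfφ⟩ := Finset.mem_filter.mp hφ
          obtain ⟨h, hadd⟩ := hspec φ hφL
          have : π.get ⟨f φ, h⟩ = π.get j := by congr 1; exact Fin.ext hfφ
          exact hc φ hφL _ (this ▸ hadd)
        have step2 : ∑ φ ∈ L.filter (fun φ => f φ = j.val), x (π.get j) φ ≤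
            ∑ φ ∈ L.filter (fun φ => φ ∈ (π.get j).add), x (π.get j) φ := by
          apply Finset.sum_le_sum_of_subset
          intro φ hφ
          obtain ⟨hφL, hfφ⟩ := Finset.mem_filter.mp hφ
          obtain ⟨h, hadd⟩ := hspec φ hφL
          have : π.get ⟨f φ, h⟩ = π.get j := by congr 1; exact Fin.ext hfφ
          exact Finset.mem_filter.mpr ⟨hφL, this ▸ hadd⟩
        exact le_trans step1 (le_trans step2 (hx _))
    _ = planCost π := (planCost_eq_fin π).symm
end
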